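/- Let α be irrational and N ≥ 2 with N = first(N) + last(N). Then for every m with last(N) ≤ m < N, the point m - last(N) is the successor of m on the circle: 0 ≤ m - last(N) < N, and for every i with 0 < i < N, it is not the case that {m·α} < {i·α} < {(m - last(N))·α}. -/

import Mathlib

private lemma fract_sub_fract (x y : ℝ) :
    Int.fract (x - y) = Int.fract (Int.fract x - Int.fract y) := by
  have h : x - y = (Int.fract x - Int.fract y) + ((⌊x⌋ - ⌊y⌋ : ℤ) : ℝ) := by
    unfold Int.fract; push_cast; ring
  rw [h, Int.fract_add_intCast]

private lemma fract_add_fract (x y : ℝ) :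
    Int.fract (x + y) = Int.fract (Int.fract x + Int.fract y) := by
  have h : x + y = (Int.fract x + Int.fract y) + ((⌊x⌋ + ⌊y⌋ : ℤ) : ℝ) := by
    unfold Int.fract; push_cast; ring
  rw [h, Int.fract_add_intCast]

private lemma fract_ne_zero {α : ℝ} (hα : Irrational α) {k : ℕ} (hk : 0 < k) :
    Int.fract ((k : ℝ) * α) ≠ 0 := by
  intro h
  have h2 : Irrational ((k : ℝ) * α) := hα.natCast_mul hk.ne'
  rw [Int.fract] at h
  exact h2.ne_int ⌊(k : ℝ) * α⌋ (by linarith)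

theorem successor_sub_last (α : ℝ) (hα : Irrational α) (N : ℕ) (hN : 2 ≤ N)
    (f l : ℕ) (hf0 : 0 < f) (hfN : f < N)
    (hf : ∀ m : ℕ, 0 < m → m < N → Int.fract (f * α) ≤ Int.fract (m * α))
    (hl0 : 0 < l) (hlN : l < N)
    (hl : ∀ m : ℕ, 0 < m → m < N → Int.fract (m * α) ≤ Int.fract (l * α))
    (hNM : N = f + l) :
    ∀ m : ℕ, l ≤ m → m < N →
      m - l < N ∧
      ∀ i : ℕ, 0 < i → i < N →
        ¬(Int.fract (m * α) < Int.fract (i * α) ∧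
          Int.fract (i * α) < Int.fract ((m - l : ℕ) * α)) := by
  intro m hlm hmN
  refine ⟨lt_of_le_of_lt (Nat.sub_le m l) hmN, ?_⟩
  rintro i hi0 hiN ⟨h1, h2⟩
  rcases eq_or_lt_of_le hlm with hml | hml
  · -- m = l : m - l = 0, fract 0 = 0, impossible
    subst hml
    simp [Nat.sub_self] at h2
    exact absurd h2 (not_lt.mpr (Int.fract_nonneg _))
  · -- l < m
    have hm0 : 0 < m := lt_trans hl0 hml
    set u := Int.fract ((m : ℝ) * α) with hu
    set v := Int.fract ((l : ℝ) * α) with hv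
    have huv : u ≤ v := hl m hm0 hmN
    have hcast : (((m - l : ℕ)) : ℝ) = (m : ℝ) - (l : ℝ) := by
      push_cast [Nat.cast_sub hlm]; ring
    have hml0 : 0 < m - l := Nat.sub_pos_of_lt hml
    have hkey : Int.fract (((m - l : ℕ) : ℝ) * α) = Int.fract (u - v) := by
      rw [hcast, sub_mul, fract_sub_fract]
    have hne : u ≠ v := by
      intro h
      apply fract_ne_zero hα hml0
      rw [hkey, h, sub_self, Int.fract_zero]
    have huv' : u < v := lt_of_le_of_ne huv hne
    have hu0 : 0 ≤ u := Int.fract_nonneg _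
    have hv1 : v < 1 := Int.fract_lt_one _
    have hfl : ⌊u - v⌋ = -1 := by
      apply Int.floor_eq_iff.mpr
      constructor <;> push_cast <;> linarith
    have hw : Int.fract (((m - l : ℕ) : ℝ) * α) = u - v + 1 := by
      rw [hkey, Int.fract]
      rw [hfl]; push_cast; ring
    rw [hw] at h2
    set w := Int.fract ((i : ℝ) * α) with hwi
    -- h1 : u < w, h2 : w < u - v + 1
    rcases lt_trichotomy i m with him | him | him
    · -- i < m : consider k = m - i
      have hk0 : 0 < m - i := Nat.sub_pos_of_lt him
      have hkN : m - i < N := lt_of_le_of_lt (Nat.sub_le m i) hmN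
      have hc : (((m - i : ℕ)) : ℝ) = (m : ℝ) - (i : ℝ) := by
        push_cast [Nat.cast_sub (le_of_lt him)]; ring
      have hfr : Int.fract (((m - i : ℕ) : ℝ) * α) = u - w + 1 := by
        rw [hc, sub_mul, fract_sub_fract, ← hu, ← hwi, Int.fract]
        have : ⌊u - w⌋ = -1 := by
          apply Int.floor_eq_iff.mpr
          have := Int.fract_lt_one ((i : ℝ) * α)
          constructor <;> push_cast <;> [linarith; linarith]
        rw [this]; push_cast; ring
      have := hl (m - i) hk0 hkN
      rw [hfr] at this
      linarith
    · have : w = u := by rw [hwi, hu, him]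
      linarith
    · -- i > m : consider k = i - m, then j = k + l
      have hk0 : 0 < i - m := Nat.sub_pos_of_lt him
      have hkf : i - m < f := by omega
      have hc : (((i - m : ℕ)) : ℝ) = (i : ℝ) - (m : ℝ) := by
        push_cast [Nat.cast_sub (le_of_lt him)]; ring
      have hfr : Int.fract (((i - m : ℕ) : ℝ) * α) = w - u := by
        rw [hc, sub_mul, fract_sub_fract, ← hu, ← hwi]
        apply Int.fract_eq_self.mpr
        have := Int.fract_lt_one ((i : ℝ) * α)
        constructor <;> linarith
      have hj0 : 0 < i - m + l := by omega
      have hjN : i - m + l < N := by omega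
      have hfrj : Int.fract (((i - m + l : ℕ) : ℝ) * α) = (w - u) + v := by
        push_cast
        rw [add_mul, fract_add_fract, hfr, ← hv]
        apply Int.fract_eq_self.mpr
        have hv0 : 0 ≤ v := Int.fract_nonneg _
        constructor <;> linarith
      have := hl (i - m + l) hj0 hjN
      rw [hfrj] at this
      linarith
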